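/- Let (Δ_ℓ)_{ℓ≥0} be a sequence of integrable real random variables with Σ_{ℓ=0}^∞ E[|Δ_ℓ|] < ∞, and let I be an ℕ-valued random variable independent of the sequence with P(I = ℓ) = w_ℓ, where each w_ℓ > 0 and Σ_{ℓ=0}^∞ w_ℓ = 1. Then the single-term randomized multilevel estimator Δ_I / w_I is integrable and E[Δ_I / w_I] = Σ_{ℓ=0}^∞ E[Δ_ℓ]. -/

import Mathlib

open MeasureTheory ProbabilityTheory

/-- Unbiasedness of the single-term randomized multilevel estimator: if
`Σ_ℓ E[|Δ_ℓ|] < ∞` and `I` is independent of the sequence `(Δ_ℓ)` with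
`P(I = ℓ) = w_ℓ > 0`, `Σ w_ℓ = 1`, then `Δ_I / w_I` is integrable and
`E[Δ_I / w_I] = Σ_ℓ E[Δ_ℓ]`. -/
theorem stmt_10 {Ω : Type*} [MeasurableSpace Ω] (μ : Measure Ω)
    [IsProbabilityMeasure μ]
    (Δ : ℕ → Ω → ℝ) (hΔ_meas : ∀ ℓ, Measurable (Δ ℓ))
    (I : Ω → ℕ) (hI_meas : Measurable I)
    (hindep : IndepFun I (fun ω ℓ => Δ ℓ ω) μ)
    (w : ℕ → ℝ) (hw_pos : ∀ ℓ, 0 < w ℓ) (hw_sum : ∑' ℓ, w ℓ = 1)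
    (hI_law : ∀ ℓ, μ (I ⁻¹' {ℓ}) = ENNReal.ofReal (w ℓ))
    (hΔ_int : ∀ ℓ, Integrable (Δ ℓ) μ)
    (hsum : Summable fun ℓ => ∫ ω, |Δ ℓ ω| ∂μ) :
    Integrable (fun ω => Δ (I ω) ω / w (I ω)) μ ∧
    ∫ ω, Δ (I ω) ω / w (I ω) ∂μ = ∑' ℓ, ∫ ω, Δ ℓ ω ∂μ := by
  classical
  set χ : ℕ → Ω → ℝ := fun ℓ ω => if I ω = ℓ then (1:ℝ) else 0 with hχdef
  have hA : ∀ ℓ, MeasurableSet (I ⁻¹' {ℓ}) := fun ℓ => hI_meas (measurableSet_singleton ℓ)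
  have hχ_ind : ∀ ℓ, χ ℓ = Set.indicator (I ⁻¹' {ℓ}) (fun _ => (1:ℝ)) := by
    intro ℓ; funext ω; simp [hχdef, Set.indicator, Set.mem_preimage]
  have hχ_meas : ∀ ℓ, Measurable (χ ℓ) := by
    intro ℓ; rw [hχ_ind]; exact (measurable_const.indicator (hA ℓ))
  have hχ_int : ∀ ℓ, Integrable (χ ℓ) μ := by
    intro ℓ; rw [hχ_ind]; exact (integrable_const (1:ℝ)).indicator (hA ℓ)
  have hχ_integral : ∀ ℓ, ∫ ω, χ ℓ ω ∂μ = w ℓ := by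
    intro ℓ
    rw [hχ_ind]
    rw [integral_indicator_const (1:ℝ) (hA ℓ), measureReal_def, hI_law ℓ, smul_eq_mul, mul_one,
      ENNReal.toReal_ofReal (hw_pos ℓ).le]
  -- independence
  have hIΔ : ∀ ℓ, IndepFun I (Δ ℓ) μ := fun ℓ =>
    hindep.comp measurable_id (measurable_pi_apply ℓ)
  have hind : ∀ ℓ, ∀ ψ : ℝ → ℝ, Measurable ψ →
      IndepFun (χ ℓ) (fun ω => ψ (Δ ℓ ω)) μ := by
    intro ℓ ψ hψ
    exact (hIΔ ℓ).comp (measurable_from_top (f := fun n => if n = ℓ then (1:ℝ) else 0)) hψ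
  have hmul : ∀ ℓ, ∀ ψ : ℝ → ℝ, Measurable ψ →
      ∫ ω, χ ℓ ω * ψ (Δ ℓ ω) ∂μ = w ℓ * ∫ ω, ψ (Δ ℓ ω) ∂μ := by
    intro ℓ ψ hψ
    have := (hind ℓ ψ hψ).integral_mul_eq_mul_integral ((hχ_meas ℓ).aestronglyMeasurable)
      ((hψ.comp (hΔ_meas ℓ)).aestronglyMeasurable)
    simpa [hχ_integral ℓ] using this
  -- the pieces
  set g : ℕ → Ω → ℝ := fun ℓ ω => χ ℓ ω * (Δ ℓ ω / w ℓ) with hgdef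
  have hg_meas : ∀ ℓ, Measurable (g ℓ) := fun ℓ =>
    (hχ_meas ℓ).mul ((hΔ_meas ℓ).div_const _)
  have hg_int : ∀ ℓ, Integrable (g ℓ) μ := by
    intro ℓ
    have : Integrable (χ ℓ * fun ω => Δ ℓ ω / w ℓ) μ :=
      (hind ℓ (fun x => x / w ℓ) (measurable_id.div_const _)).integrable_mul (hχ_int ℓ)
        ((hΔ_int ℓ).div_const _)
    exact this
  have hg_integral : ∀ ℓ, ∫ ω, g ℓ ω ∂μ = ∫ ω, Δ ℓ ω ∂μ := by
    intro ℓ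
    have h := hmul ℓ (fun x => x / w ℓ) (measurable_id.div_const _)
    simp only [hgdef]
    rw [h, integral_div, mul_div_cancel₀ _ (hw_pos ℓ).ne']
  have hg_norm : ∀ ℓ, ∫ ω, ‖g ℓ ω‖ ∂μ = ∫ ω, |Δ ℓ ω| ∂μ := by
    intro ℓ
    have hnorm : ∀ ω, ‖g ℓ ω‖ = χ ℓ ω * (|Δ ℓ ω| / w ℓ) := by
      intro ω
      simp only [hgdef, hχdef, Real.norm_eq_abs, abs_mul, abs_div,
        abs_of_pos (hw_pos ℓ)]
      split <;> simp
    simp_rw [hnorm]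
    have h := hmul ℓ (fun x => |x| / w ℓ) (measurable_abs.div_const _)
    rw [h, integral_div, mul_div_cancel₀ _ (hw_pos ℓ).ne']
  -- sum identity pointwise
  have hkey : ∀ ω, (∑' ℓ, g ℓ ω) = Δ (I ω) ω / w (I ω) := by
    intro ω
    rw [tsum_eq_single (I ω)]
    · simp [hgdef, hχdef]
    · intro b hb
      simp [hgdef, hχdef, Ne.symm hb]
  -- measurability of the estimator
  have hf_meas : Measurable (fun ω => Δ (I ω) ω / w (I ω)) := by
    have h1 : Measurable (fun p : Ω × ℕ => Δ p.2 p.1 / w p.2) :=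
      measurable_from_prod_countable_left (fun n => by
        simpa using (hΔ_meas n).div_const (w n))
    exact h1.comp (measurable_id.prodMk hI_meas)
  -- integrability
  have hsum_norm : Summable fun ℓ => ∫ ω, ‖g ℓ ω‖ ∂μ := by
    exact hsum.congr fun ℓ => (hg_norm ℓ).symm
  have hf_int : Integrable (fun ω => Δ (I ω) ω / w (I ω)) μ := by
    refine ⟨hf_meas.aestronglyMeasurable, ?_⟩
    have hfi : ∫⁻ ω, ‖Δ (I ω) ω / w (I ω)‖₊ ∂μ = ∑' ℓ, ∫⁻ ω, ‖g ℓ ω‖₊ ∂μ := by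
      rw [← lintegral_tsum (fun ℓ => ((hg_meas ℓ).nnnorm.coe_nnreal_ennreal).aemeasurable)]
      refine lintegral_congr fun ω => ?_
      have hone : ∀ ℓ, ℓ ≠ I ω → (‖g ℓ ω‖₊ : ENNReal) = 0 := by
        intro ℓ hℓ
        simp [hgdef, hχdef, Ne.symm hℓ]
      rw [tsum_eq_single (I ω) hone]
      simp [hgdef, hχdef]
    have hval : ∀ ℓ, ∫⁻ ω, ‖g ℓ ω‖₊ ∂μ = ENNReal.ofReal (∫ ω, |Δ ℓ ω| ∂μ) := by
      intro ℓ
      simp_rw [← enorm_eq_nnnorm]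
      rw [← ofReal_integral_norm_eq_lintegral_enorm (hg_int ℓ), hg_norm ℓ]
    have hnonneg : ∀ ℓ, (0:ℝ) ≤ ∫ ω, |Δ ℓ ω| ∂μ := fun ℓ =>
      integral_nonneg fun ω => abs_nonneg _
    unfold HasFiniteIntegral
    simp only [enorm_eq_nnnorm]
    rw [hfi]
    simp_rw [hval]
    rw [← ENNReal.ofReal_tsum_of_nonneg hnonneg hsum]
    exact ENNReal.ofReal_lt_top
  refine ⟨hf_int, ?_⟩
  have := integral_tsum_of_summable_integral_norm hg_int hsum_norm
  calc ∫ ω, Δ (I ω) ω / w (I ω) ∂μ = ∫ ω, ∑' ℓ, g ℓ ω ∂μ := by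
        refine integral_congr_ae (Filter.Eventually.of_forall fun ω => (hkey ω).symm)
    _ = ∑' ℓ, ∫ ω, g ℓ ω ∂μ := this.symm
    _ = ∑' ℓ, ∫ ω, Δ ℓ ω ∂μ := by exact tsum_congr hg_integral
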